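/- Let μ ∈ ℝ, σ > 0, k, a ∈ ℝ and let ψ(x) = exp(k|x−μ|/σ) φ((x−μ−a)/σ), where φ is the standard normal density. Then the set of local maximum points of ψ is: {μ+a−σk, μ+a+σk} if σk > |a|; {μ+a−σk} if a < σk < −a; {μ+a+σk} if −a < σk < a; and {μ} if σk ≤ −|a|. In particular the BUN density is bimodal exactly when σk > |a|, with modes μ+a±σk. -/

import Mathlib

open MeasureTheory Real Set

noncomputable def phi (x : ℝ) : ℝ := (Real.sqrt (2 * Real.pi))⁻¹ * Real.exp (-(x ^ 2) / 2)

noncomputable def gfun (μ σ k a : ℝ) (x : ℝ) : ℝ :=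
  k * |x - μ| / σ - ((x - μ - a) / σ) ^ 2 / 2

lemma g_right {μ σ k a : ℝ} (hσ : 0 < σ) {x : ℝ} (hx : μ ≤ x) :
    gfun μ σ k a x =
      ((a + σ*k)^2 - a^2) / (2*σ^2) - (x - (μ + a + σ*k))^2 / (2*σ^2) := by
  have hσ' : σ ≠ 0 := ne_of_gt hσ
  unfold gfun
  rw [abs_of_nonneg (by linarith : (0:ℝ) ≤ x - μ)]
  field_simp
  ring

lemma g_left {μ σ k a : ℝ} (hσ : 0 < σ) {x : ℝ} (hx : x ≤ μ) :
    gfun μ σ k a x =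
      ((a - σ*k)^2 - a^2) / (2*σ^2) - (x - (μ + a - σ*k))^2 / (2*σ^2) := by
  have hσ' : σ ≠ 0 := ne_of_gt hσ
  unfold gfun
  rw [abs_of_nonpos (by linarith : x - μ ≤ 0)]
  field_simp
  ring

lemma quad_contra {σ c m x v : ℝ} (hσ : 0 < σ) (hlt : (x - v)^2 < (m - v)^2)
    (h : c - (x - v)^2 / (2*σ^2) ≤ c - (m - v)^2 / (2*σ^2)) : False := by
  have h2 : (0:ℝ) < 2*σ^2 := by positivity
  have : (m - v)^2 / (2*σ^2) ≤ (x - v)^2 / (2*σ^2) := by linarith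
  have := (div_le_div_iff_of_pos_right h2).mp this
  nlinarith

set_option maxHeartbeats 1000000 in
lemma char (μ σ k a : ℝ) (hσ : 0 < σ) (m : ℝ) :
    IsLocalMax (gfun μ σ k a) m ↔
      (m = μ + a + σ*k ∧ μ < m) ∨ (m = μ + a - σ*k ∧ m < μ) ∨
        (m = μ ∧ σ*k ≤ -|a|) := by
  set r : ℝ := μ + a + σ*k with hr_def
  set l : ℝ := μ + a - σ*k with hl_def
  constructor
  · intro h
    obtain ⟨ε, hε, hball⟩ := Metric.eventually_nhds_iff.mp h
    simp only [Real.dist_eq] at hball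
    rcases lt_trichotomy m μ with hmμ | hmμ | hmμ
    · -- m < μ : must have m = l
      right; left
      refine ⟨?_, hmμ⟩
      by_contra hne
      rcases lt_or_gt_of_ne hne with hml | hml
      · -- m < l
        set δ := min ε (min (l - m) (μ - m)) with hδ
        have hδpos : 0 < δ := by
          apply lt_min hε; apply lt_min <;> linarith
        set x := m + δ / 2 with hx
        have hd1 : δ ≤ ε := min_le_left _ _
        have hd2 : δ ≤ l - m := le_trans (min_le_right _ _) (min_le_left _ _)
        have hd3 : δ ≤ μ - m := le_trans (min_le_right _ _) (min_le_right _ _)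
        have hxm : m < x := by simp [hx]; linarith
        have hxl : x < l := by simp [hx]; linarith
        have hxμ : x ≤ μ := by simp [hx]; linarith
        have hb := hball (show |x - m| < ε by rw [abs_of_nonneg (by linarith)]; simp [hx]; linarith)
        rw [g_left hσ hxμ, g_left hσ (le_of_lt hmμ)] at hb
        exact quad_contra hσ (by nlinarith) hb
      · -- l < m
        set δ := min ε (m - l) with hδ
        have hδpos : 0 < δ := lt_min hε (by linarith)
        set x := m - δ / 2 with hx
        have hd1 : δ ≤ ε := min_le_left _ _
        have hd2 : δ ≤ m - l := min_le_right _ _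
        have hxm : x < m := by simp [hx]; linarith
        have hxl : l < x := by simp [hx]; linarith
        have hxμ : x ≤ μ := by simp [hx]; linarith
        have hb := hball (show |x - m| < ε by rw [abs_of_nonpos (by linarith)]; simp [hx]; linarith)
        rw [g_left hσ hxμ, g_left hσ (le_of_lt hmμ)] at hb
        exact quad_contra hσ (by nlinarith) hb
    · -- m = μ : need σk ≤ -|a|
      right; right
      refine ⟨hmμ, ?_⟩
      subst hmμ
      have h1 : σ*k ≤ -a := by
        by_contra hc
        push_neg at hc
        have hrm : m < r := by rw [hr_def]; linarith
        set δ := min ε (r - m) with hδ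
        have hδpos : 0 < δ := lt_min hε (by linarith)
        set x := m + δ / 2 with hx
        have hd1 : δ ≤ ε := min_le_left _ _
        have hd2 : δ ≤ r - m := min_le_right _ _
        have hxm : m < x := by simp [hx]; linarith
        have hxr : x < r := by simp [hx]; linarith
        have hb := hball (show |x - m| < ε by rw [abs_of_nonneg (by linarith)]; simp [hx]; linarith)
        rw [g_right hσ (le_of_lt hxm), g_right hσ le_rfl] at hb
        exact quad_contra hσ (by nlinarith) hb
      have h2 : σ*k ≤ a := by
        by_contra hc
        push_neg at hc
        have hlm : l < m := by rw [hl_def]; linarith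
        set δ := min ε (m - l) with hδ
        have hδpos : 0 < δ := lt_min hε (by linarith)
        set x := m - δ / 2 with hx
        have hd1 : δ ≤ ε := min_le_left _ _
        have hd2 : δ ≤ m - l := min_le_right _ _
        have hxm : x < m := by simp [hx]; linarith
        have hxl : l < x := by simp [hx]; linarith
        have hb := hball (show |x - m| < ε by rw [abs_of_nonpos (by linarith)]; simp [hx]; linarith)
        rw [g_left hσ (le_of_lt hxm), g_left hσ le_rfl] at hb
        exact quad_contra hσ (by nlinarith) hb
      rcases abs_cases a with ⟨ha, _⟩ | ⟨ha, _⟩ <;> rw [ha] <;> linarith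
    · -- μ < m : must have m = r
      left
      refine ⟨?_, hmμ⟩
      by_contra hne
      rcases lt_or_gt_of_ne hne with hmr | hmr
      · -- m < r
        set δ := min ε (r - m) with hδ
        have hδpos : 0 < δ := lt_min hε (by linarith)
        set x := m + δ / 2 with hx
        have hd1 : δ ≤ ε := min_le_left _ _
        have hd2 : δ ≤ r - m := min_le_right _ _
        have hxm : m < x := by simp [hx]; linarith
        have hxr : x < r := by simp [hx]; linarith
        have hxμ : μ ≤ x := by linarith
        have hb := hball (show |x - m| < ε by rw [abs_of_nonneg (by linarith)]; simp [hx]; linarith)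
        rw [g_right hσ hxμ, g_right hσ (le_of_lt hmμ)] at hb
        exact quad_contra hσ (by nlinarith) hb
      · -- r < m
        set δ := min ε (min (m - r) (m - μ)) with hδ
        have hδpos : 0 < δ := by
          apply lt_min hε; apply lt_min <;> linarith
        set x := m - δ / 2 with hx
        have hd1 : δ ≤ ε := min_le_left _ _
        have hd2 : δ ≤ m - r := le_trans (min_le_right _ _) (min_le_left _ _)
        have hd3 : δ ≤ m - μ := le_trans (min_le_right _ _) (min_le_right _ _)
        have hxm : x < m := by simp [hx]; linarith
        have hxr : r < x := by simp [hx]; linarith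
        have hxμ : μ ≤ x := by simp [hx]; linarith
        have hb := hball (show |x - m| < ε by rw [abs_of_nonpos (by linarith)]; simp [hx]; linarith)
        rw [g_right hσ hxμ, g_right hσ (le_of_lt hmμ)] at hb
        exact quad_contra hσ (by nlinarith) hb
  · intro h
    rcases h with ⟨hm, hmμ⟩ | ⟨hm, hmμ⟩ | ⟨hm, hka⟩
    · -- m = r, μ < m : local max at r
      subst hm
      filter_upwards [Ioi_mem_nhds hmμ] with x hx
      rw [g_right hσ (le_of_lt hx), g_right hσ (le_of_lt hmμ)]
      have h2 : (0:ℝ) < 2*σ^2 := by positivity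
      have h3 : (0:ℝ) ≤ (x - r)^2 / (2*σ^2) := by positivity
      have h4 : (r - r)^2 / (2*σ^2) = 0 := by simp
      linarith
    · -- m = l, m < μ
      subst hm
      filter_upwards [Iio_mem_nhds hmμ] with x hx
      rw [g_left hσ (le_of_lt hx), g_left hσ (le_of_lt hmμ)]
      have h3 : (0:ℝ) ≤ (x - l)^2 / (2*σ^2) := by positivity
      have h4 : (l - l)^2 / (2*σ^2) = 0 := by simp
      linarith
    · -- m = μ, σk ≤ -|a| : global max
      subst hm
      have ha1 : -a ≤ |a| := neg_le_abs a
      have ha2 : a ≤ |a| := le_abs_self a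
      have hrμ : r ≤ m := by rw [hr_def]; linarith
      have hlμ : m ≤ l := by rw [hl_def]; linarith
      have h2 : (0:ℝ) < 2*σ^2 := by positivity
      apply Filter.Eventually.of_forall
      intro x
      rcases le_total x m with hxμ | hxμ
      · rw [g_left hσ hxμ, g_left hσ le_rfl]
        have : (m - l)^2 ≤ (x - l)^2 := by nlinarith
        have := (div_le_div_iff_of_pos_right h2).mpr this
        linarith
      · rw [g_right hσ hxμ, g_right hσ le_rfl]
        have : (m - r)^2 ≤ (x - r)^2 := by nlinarith
        have := (div_le_div_iff_of_pos_right h2).mpr this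
        linarith

theorem stmt_15 (μ σ k a : ℝ) (hσ : 0 < σ) :
    let ψ : ℝ → ℝ := fun x => Real.exp (k * |x - μ| / σ) * phi ((x - μ - a) / σ)
    (|a| < σ * k →
        {m : ℝ | IsLocalMax ψ m} = {μ + a - σ * k, μ + a + σ * k}) ∧
      (a < σ * k ∧ σ * k < -a → {m : ℝ | IsLocalMax ψ m} = {μ + a - σ * k}) ∧
      (-a < σ * k ∧ σ * k < a → {m : ℝ | IsLocalMax ψ m} = {μ + a + σ * k}) ∧
      (σ * k ≤ -|a| → {m : ℝ | IsLocalMax ψ m} = {μ}) := by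
  intro ψ
  have hψ : ψ = fun x => Real.exp (k * |x - μ| / σ) * phi ((x - μ - a) / σ) := rfl
  have cpos : (0:ℝ) < (Real.sqrt (2 * Real.pi))⁻¹ := by
    have : (0:ℝ) < Real.sqrt (2 * Real.pi) :=
      Real.sqrt_pos.mpr (by positivity)
    positivity
  have key : ∀ x, ψ x = (Real.sqrt (2 * Real.pi))⁻¹ * Real.exp (gfun μ σ k a x) := by
    intro x
    rw [hψ]
    simp only [phi, gfun]
    rw [mul_comm, mul_assoc, ← Real.exp_add]
    congr 1
    ring
  have hiff : ∀ m, IsLocalMax ψ m ↔ IsLocalMax (gfun μ σ k a) m := by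
    intro m
    unfold IsLocalMax IsMaxFilter
    apply Filter.eventually_congr
    apply Filter.Eventually.of_forall
    intro x
    rw [key x, key m, mul_le_mul_iff_right₀ cpos, Real.exp_le_exp]
  have hset : ∀ m : ℝ, IsLocalMax ψ m ↔
      (m = μ + a + σ*k ∧ μ < m) ∨ (m = μ + a - σ*k ∧ m < μ) ∨
        (m = μ ∧ σ*k ≤ -|a|) := fun m => (hiff m).trans (char μ σ k a hσ m)
  have ha1 : -a ≤ |a| := neg_le_abs a
  have ha2 : a ≤ |a| := le_abs_self a
  have ha0 : 0 ≤ |a| := abs_nonneg a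
  refine ⟨?_, ?_, ?_, ?_⟩
  · intro hcase
    ext m
    rw [Set.mem_setOf_eq, hset m]
    simp only [Set.mem_insert_iff, Set.mem_singleton_iff]
    constructor
    · rintro (⟨h, _⟩ | ⟨h, _⟩ | ⟨_, h⟩)
      · right; exact h
      · left; exact h
      · linarith
    · rintro (h | h)
      · right; left; exact ⟨h, by rw [h]; linarith⟩
      · left; exact ⟨h, by rw [h]; linarith⟩
  · rintro ⟨h1, h2⟩
    ext m
    rw [Set.mem_setOf_eq, hset m]
    simp only [Set.mem_singleton_iff]
    constructor
    · rintro (⟨h, hm⟩ | ⟨h, _⟩ | ⟨_, h⟩)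
      · rw [h] at hm; linarith
      · exact h
      · linarith
    · intro h
      right; left; exact ⟨h, by rw [h]; linarith⟩
  · rintro ⟨h1, h2⟩
    ext m
    rw [Set.mem_setOf_eq, hset m]
    simp only [Set.mem_singleton_iff]
    constructor
    · rintro (⟨h, _⟩ | ⟨h, hm⟩ | ⟨_, h⟩)
      · exact h
      · rw [h] at hm; linarith
      · linarith
    · intro h
      left; exact ⟨h, by rw [h]; linarith⟩
  · intro hcase
    ext m
    rw [Set.mem_setOf_eq, hset m]
    simp only [Set.mem_singleton_iff]
    constructor
    · rintro (⟨h, hm⟩ | ⟨h, hm⟩ | ⟨h, _⟩)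
      · rw [h] at hm; linarith
      · rw [h] at hm; linarith
      · exact h
    · intro h
      right; right; exact ⟨h, hcase⟩
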